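/- Let N ≥ 2, let A be an N×N complex matrix with τ = tr A, let v ∈ ℂ^N be a unit vector with α = ⟨v, A v⟩, and assume τ ≠ 0, α ≠ 0 and Nα ≠ τ. Then the map Φ† defined by Φ†[B] = (⟨v, B v⟩/α)·A + ((tr B/τ − ⟨v, B v⟩/α)/(N/τ − 1/α))·(𝟙 − A/α) is idempotent: for every N×N complex matrix B, Φ†[Φ†[B]] = Φ†[B]. -/

import Mathlib

open Matrix

/-- The map `Φ†[B] = (⟨v,Bv⟩/α)·A + ((tr B/τ − ⟨v,Bv⟩/α)/(N/τ − 1/α))·(𝟙 − A/α)`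
is idempotent: `Φ†[Φ†[B]] = Φ†[B]` for every `B`. -/
theorem phiDagger_idempotent (N : ℕ) (hN : 2 ≤ N)
    (A : Matrix (Fin N) (Fin N) ℂ)
    (v : Fin N → ℂ) (hv : star v ⬝ᵥ v = 1)
    (τ α : ℂ) (hτ : A.trace = τ) (hα : star v ⬝ᵥ A.mulVec v = α)
    (hτ0 : τ ≠ 0) (hα0 : α ≠ 0) (hNα : (N : ℂ) * α ≠ τ)
    (Φ : Matrix (Fin N) (Fin N) ℂ → Matrix (Fin N) (Fin N) ℂ)
    (hΦ : ∀ B, Φ B = ((star v ⬝ᵥ B.mulVec v) / α) • A +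
      ((B.trace / τ - (star v ⬝ᵥ B.mulVec v) / α) / ((N : ℂ) / τ - 1 / α)) •
        (1 - α⁻¹ • A)) :
    ∀ B, Φ (Φ B) = Φ B := by
  intro B
  have hD : (N : ℂ) / τ - 1 / α ≠ 0 := by
    rw [div_sub_div _ _ hτ0 hα0, div_ne_zero_iff]
    exact ⟨sub_ne_zero.mpr (by simpa using hNα), mul_ne_zero hτ0 hα0⟩
  rw [hΦ (Φ B)]
  rw [hΦ B]
  simp only [add_mulVec, smul_mulVec, sub_mulVec, one_mulVec, mulVec_smul,
    dotProduct_add, dotProduct_smul, dotProduct_sub, trace_add, trace_smul, trace_sub,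
    trace_one, hv, hα, hτ, smul_eq_mul, Fintype.card_fin]
  set s := star v ⬝ᵥ B *ᵥ v with hs
  set t := B.trace with ht
  set D := (N : ℂ) / τ - 1 / α with hDdef
  have hNτ : ((N : ℂ) - α⁻¹ * τ) = τ * D := by
    rw [hDdef]; field_simp
  rw [hNτ]
  set γ := (t / τ - s / α) / D with hγ
  have hγD : γ * D = t / τ - s / α := div_mul_cancel₀ _ hD
  congr 1
  · congr 1
    rw [inv_mul_cancel₀ hα0]
    field_simp
    simp
  · congr 1
    rw [inv_mul_cancel₀ hα0, sub_self, mul_zero, add_zero, div_mul_cancel₀ _ hα0]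
    have e1 : (s / α * τ + γ * (τ * D)) / τ = s / α + γ * D := by
      field_simp
    rw [e1, add_sub_cancel_left, mul_div_assoc, div_self hD, mul_one]
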